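/- Let T = ⟨P, 𝒢, O⟩ be a plan-recognition theory with O pairwise distinct, P' the transformed domain with c(o_a) = c(a), and G ∈ 𝒢 a goal that is solvable in P. Then G belongs to the optimal goal set 𝒢*_T if and only if the goal G' = G ∪ F_o is solvable in P' and c*_{P'}(G) = c*_{P'}(G'), where c*_{P'}(H) denotes the optimal (minimum) cost of achieving H in P'. -/

import Mathlib

/-- A STRIPS planning domain: fluents `F`, actions `A`, an initial state `I`,
and precondition/add/delete lists for each action.  A planning problem is
obtained by pairing a domain with a goal `G : Set F`. -/
structure Strips (F A : Type) where
  I : Set F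
  pre : A → Set F
  add : A → Set F
  del : A → Set F

namespace Strips

variable {F A : Type}

/-- The result of applying action `a` in state `s`: `(s \ Del(a)) ∪ Add(a)`. -/
def applyA (P : Strips F A) (s : Set F) (a : A) : Set F := (s \ P.del a) ∪ P.add a

/-- `Exec P s π t`: the action sequence `π` is applicable successively from
state `s` (each action's precondition holds when it is applied) and leads to
the state `t`. -/
inductive Exec (P : Strips F A) : Set F → List A → Set F → Prop
  | nil (s : Set F) : Exec P s [] s
  | cons {s t : Set F} {a : A} {π : List A} :
      P.pre a ⊆ s → Exec P (P.applyA s a) π t → Exec P s (a :: π) t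

/-- `π` is a plan for the goal `G` in the domain `P`: it is applicable
successively from the initial state and its final state contains `G`. -/
def IsPlan (P : Strips F A) (G : Set F) (π : List A) : Prop :=
  ∃ t, Exec P P.I π t ∧ G ⊆ t

/-- The cost of a plan: the sum of the costs of its actions. -/
def planCost (c : A → ℝ) (π : List A) : ℝ := (π.map c).sum

/-- An optimal plan for `G`: a plan for `G` of minimum cost among all plans for `G`. -/
def IsOptimalPlan (P : Strips F A) (c : A → ℝ) (G : Set F) (π : List A) : Prop :=
  P.IsPlan G π ∧ ∀ π', P.IsPlan G π' → planCost c π ≤ planCost c π'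

/-- `c*_P(G)`: the optimal (minimum) cost of achieving `G` in `P`. -/
noncomputable def cstar (P : Strips F A) (c : A → ℝ) (G : Set F) : ℝ :=
  sInf (planCost c '' {π | P.IsPlan G π})

/-- An action sequence `π` satisfies the observation sequence `O` iff there is a
strictly monotonic function `f` from observation indices into action indices
such that the `f j`-th action of `π` equals the `j`-th observation. -/
def Satisfies (π O : List A) : Prop :=
  ∃ f : Fin O.length → Fin π.length, StrictMono f ∧ ∀ j, π.get (f j) = O.get j

end Strips

/-- The transformed domain `P'` of a plan-recognition theory `⟨P, 𝒢, O⟩`: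
fluents `F' = F ⊕ Fin m` (the fluent `Sum.inr j` is `p_{o_j}`), actions
`A' = A ⊕ Fin m` (the action `Sum.inr j` is the new action `o_{o_j}`),
initial state `I' = I`.  The new action `o_{o_j}` has the same precondition,
add and delete lists as the observed action `o_j = O.get j`, except that
`p_{o_j}` is added to its add list and `p_{o_{j-1}}` (for the observation
immediately preceding `o_j` in `O`, if any, i.e. when `j > 0`) is added to its
precondition. -/
def Strips.transform (P : Strips F A) (O : List A) :
    Strips (F ⊕ Fin O.length) (A ⊕ Fin O.length) where
  I := Sum.inl '' P.I
  pre := fun x => match x with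
    | Sum.inl a => Sum.inl '' P.pre a
    | Sum.inr j => Sum.inl '' P.pre (O.get j) ∪
        {p | ∃ _ : 0 < (j : ℕ), p = Sum.inr
          (⟨(j : ℕ) - 1, Nat.lt_of_le_of_lt (Nat.sub_le _ _) j.isLt⟩ : Fin O.length)}
  add := fun x => match x with
    | Sum.inl a => Sum.inl '' P.add a
    | Sum.inr j => insert (Sum.inr j) (Sum.inl '' P.add (O.get j))
  del := fun x => match x with
    | Sum.inl a => Sum.inl '' P.del a
    | Sum.inr j => Sum.inl '' P.del (O.get j)

/-- The set `F_o` of new fluents `p_a`, `a ∈ O`, of the transformed domain. -/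
def obsFluents {F : Type} (O : List A) : Set (F ⊕ Fin O.length) := Set.range Sum.inr

/-- The transformed goal `G' = G ∪ F_o`. -/
def goalTransform {F : Type} (O : List A) (G : Set F) : Set (F ⊕ Fin O.length) :=
  Sum.inl '' G ∪ Set.range Sum.inr

/-- The cost function of the transformed domain: `c(o_a) = c(a)`. -/
def costTransform (c : A → ℝ) (O : List A) : A ⊕ Fin O.length → ℝ :=
  Sum.elim c (fun j => c (O.get j))

namespace PRAux

open Strips

variable {F A : Type}

lemma planCost_nonneg (c : A → ℝ) (hc : ∀ a, 0 ≤ c a) (π : List A) :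
    0 ≤ Strips.planCost c π := by
  refine List.sum_nonneg ?_
  intro x hx
  obtain ⟨a, -, rfl⟩ := List.mem_map.1 hx
  exact hc a

lemma costs_bddBelow (P : Strips F A) (c : A → ℝ) (hc : ∀ a, 0 ≤ c a) (G : Set F) :
    BddBelow (Strips.planCost c '' {π | P.IsPlan G π}) := by
  refine ⟨0, ?_⟩
  rintro x ⟨ρ, -, rfl⟩
  exact planCost_nonneg c hc ρ

lemma cstar_le_planCost (P : Strips F A) (c : A → ℝ) (hc : ∀ a, 0 ≤ c a) {G : Set F}
    {π : List A} (h : P.IsPlan G π) : P.cstar c G ≤ Strips.planCost c π :=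
  csInf_le (costs_bddBelow P c hc G) ⟨π, h, rfl⟩

lemma cstar_eq_of_optimal (P : Strips F A) (c : A → ℝ) (hc : ∀ a, 0 ≤ c a) {G : Set F}
    {π : List A} (h : P.IsOptimalPlan c G π) : P.cstar c G = Strips.planCost c π := by
  refine le_antisymm (cstar_le_planCost P c hc h.1) (le_csInf ⟨_, π, h.1, rfl⟩ ?_)
  rintro x ⟨ρ, hρ, rfl⟩
  exact h.2 ρ hρ

lemma planCost_eq_sum_count [Fintype A] [DecidableEq A] (c : A → ℝ) (π : List A) :
    Strips.planCost c π = ∑ a : A, (π.count a : ℝ) * c a := by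
  induction π with
  | nil => simp [Strips.planCost]
  | cons a π ih =>
    have : ∀ b : A, ((a :: π).count b : ℝ) * c b
        = (π.count b : ℝ) * c b + (if b = a then c a else 0) := by
      intro b
      by_cases hb : b = a
      · subst hb; simp [List.count_cons]; push_cast; ring
      · simp [List.count_cons, hb, Ne.symm hb]
    rw [Finset.sum_congr rfl fun b _ => this b, Finset.sum_add_distrib,
      Finset.sum_ite_eq' Finset.univ a (fun _ => c a)]
    simp only [Strips.planCost, List.map_cons, List.sum_cons] at ih ⊢
    rw [ih]
    simp [add_comm]

/-- Attainment of the minimum cost: among a nonempty family of plans there is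
one of minimum cost. -/
lemma exists_optimal [Finite A] (P : Strips F A) (c : A → ℝ) (hc : ∀ a, 0 ≤ c a) {G : Set F}
    (h : ∃ π, P.IsPlan G π) : ∃ π, P.IsOptimalPlan c G π := by
  classical
  haveI : Fintype A := Fintype.ofFinite A
  obtain ⟨π₀, hπ₀⟩ := h
  set B := Strips.planCost c π₀ with hB
  set S := Strips.planCost c '' {π | P.IsPlan G π} with hS
  set T := S ∩ Set.Iic B with hT
  -- T is finite
  set N : A → ℕ := fun a => ⌈B / c a⌉₊ with hN
  set g : (A → ℕ) → ℝ := fun n => ∑ a : A, (n a : ℝ) * c a with hg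
  have hTsub : T ⊆ g '' (Set.pi Set.univ fun a => Set.Iic (N a)) := by
    rintro x ⟨⟨π, hπ, rfl⟩, hxB⟩
    refine ⟨fun a => if c a = 0 then 0 else π.count a, ?_, ?_⟩
    · intro a _
      by_cases ha : c a = 0
      · simp [ha]
      · simp only [ha, if_false, Set.mem_Iic]
        have hpos : 0 < c a := lt_of_le_of_ne (hc a) (Ne.symm ha)
        have h1 : (π.count a : ℝ) * c a ≤ B := by
          calc (π.count a : ℝ) * c a
              ≤ ∑ b : A, (π.count b : ℝ) * c b :=
                Finset.single_le_sum (f := fun b => (π.count b : ℝ) * c b)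
                  (fun b _ => mul_nonneg (by positivity) (hc b)) (Finset.mem_univ a)
            _ = Strips.planCost c π := (planCost_eq_sum_count c π).symm
            _ ≤ B := hxB
        have h2 : (π.count a : ℝ) ≤ B / c a := (le_div_iff₀ hpos).2 h1
        have h3 : (π.count a : ℝ) ≤ (N a : ℝ) := h2.trans (Nat.le_ceil _)
        exact_mod_cast h3
    · rw [hg]
      simp only
      rw [planCost_eq_sum_count c π]
      refine Finset.sum_congr rfl fun a _ => ?_
      by_cases ha : c a = 0 <;> simp [ha]
  have hTfin : T.Finite :=
    Set.Finite.subset (Set.Finite.image g (Set.Finite.pi fun a => Set.finite_Iic (N a))) hTsub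
  have hTne : T.Nonempty := ⟨B, ⟨π₀, hπ₀, rfl⟩, le_refl B⟩
  obtain ⟨x, hxT, hxmin⟩ := Set.exists_min_image T id hTfin hTne
  obtain ⟨⟨π, hπ, rfl⟩, hxB⟩ := hxT
  refine ⟨π, hπ, fun π' hπ' => ?_⟩
  by_cases hle : Strips.planCost c π' ≤ B
  · exact hxmin _ ⟨⟨π', hπ', rfl⟩, hle⟩
  · exact le_trans hxB (le_of_not_ge hle)

end PRAux
namespace PRAux2

open Strips

variable {F A : Type}

/-- Projection of transformed actions back to original actions. -/
def proj (O : List A) : A ⊕ Fin O.length → A := Sum.elim id O.get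

lemma costTransform_eq (c : A → ℝ) (O : List A) (x : A ⊕ Fin O.length) :
    costTransform c O x = c (proj O x) := by cases x <;> rfl

lemma planCost_map_proj (c : A → ℝ) (O : List A) (π' : List (A ⊕ Fin O.length)) :
    Strips.planCost (costTransform c O) π' = Strips.planCost c (π'.map (proj O)) := by
  simp only [Strips.planCost, List.map_map]
  congr 1
  exact List.map_congr_left fun x _ => costTransform_eq c O x

lemma planCost_map_inl (c : A → ℝ) (O : List A) (π : List A) :
    Strips.planCost (costTransform c O) (π.map (Sum.inl : A → A ⊕ Fin O.length))
      = Strips.planCost c π := by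
  simp only [Strips.planCost, List.map_map]
  rfl

/-- The "inr part bounded by k" set of fluents. -/
def obsLt (O : List A) (k : ℕ) : Set (F ⊕ Fin O.length) :=
  {x | ∃ j : Fin O.length, x = Sum.inr j ∧ (j : ℕ) < k}

lemma obsLt_all (O : List A) (k : ℕ) (hk : O.length ≤ k) :
    (obsLt O k : Set (F ⊕ Fin O.length)) = Set.range Sum.inr := by
  ext x
  constructor
  · rintro ⟨j, rfl, -⟩; exact ⟨j, rfl⟩
  · rintro ⟨j, rfl⟩; exact ⟨j, rfl, lt_of_lt_of_le j.isLt hk⟩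

lemma applyA_inl (P : Strips F A) (O : List A) (s : Set F) (k : ℕ) (a : A) :
    (P.transform O).applyA (Sum.inl '' s ∪ obsLt O k) (Sum.inl a)
      = Sum.inl '' (P.applyA s a) ∪ obsLt O k := by
  ext x
  cases x with
  | inl p => simp [Strips.applyA, Strips.transform, obsLt]
  | inr j => simp [Strips.applyA, Strips.transform, obsLt]

lemma applyA_inr (P : Strips F A) (O : List A) (s : Set F) (k : ℕ) (K : Fin O.length)
    (hK : (K : ℕ) = k) :
    (P.transform O).applyA (Sum.inl '' s ∪ obsLt O k) (Sum.inr K)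
      = Sum.inl '' (P.applyA s (O.get K)) ∪ obsLt O (k + 1) := by
  ext x
  cases x with
  | inl p => simp [Strips.applyA, Strips.transform, obsLt]
  | inr j =>
    simp [Strips.applyA, Strips.transform, obsLt, Fin.ext_iff, hK, eq_comm]
    constructor
    · rintro (h | ⟨i, hi, hik⟩)
      · exact ⟨j, rfl, by omega⟩
      · exact ⟨j, rfl, by omega⟩
    · rintro ⟨i, hi, hik⟩
      rcases Nat.lt_or_eq_of_le hik with h | h
      · exact Or.inr ⟨j, rfl, by omega⟩
      · exact Or.inl (by omega)

lemma pre_inl_subset (P : Strips F A) (O : List A) {s : Set F} (R : Set (F ⊕ Fin O.length))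
    (a : A) (h : P.pre a ⊆ s) :
    (P.transform O).pre (Sum.inl a) ⊆ Sum.inl '' s ∪ R := by
  rintro x ⟨q, hq, rfl⟩
  exact Or.inl ⟨q, h hq, rfl⟩

/-- Projection of an execution in `P'` to an execution in `P`. -/
lemma exec_proj (P : Strips F A) (O : List A) :
    ∀ {π' : List (A ⊕ Fin O.length)} {s' t' : Set (F ⊕ Fin O.length)},
      Exec (P.transform O) s' π' t' →
      Exec P (Sum.inl ⁻¹' s') (π'.map (proj O)) (Sum.inl ⁻¹' t') := by
  intro π' s' t' h
  induction h with
  | nil s => exact Exec.nil _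
  | cons hpre hexec ih =>
    rename_i s' t' x π''
    refine Exec.cons ?_ ?_
    · intro p hp
      cases x with
      | inl a => exact hpre ⟨p, hp, rfl⟩
      | inr j => exact hpre (Or.inl ⟨p, hp, rfl⟩)
    · have key : Sum.inl ⁻¹' ((P.transform O).applyA s' x)
          = P.applyA (Sum.inl ⁻¹' s') (proj O x) := by
        ext p
        cases x with
        | inl a =>
          simp [Strips.applyA, Strips.transform, proj]
        | inr j =>
          simp [Strips.applyA, Strips.transform, proj]
      rw [← key]
      exact ih

/-- Lifting an execution of `P` along `Sum.inl`. -/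
lemma exec_inl (P : Strips F A) (O : List A) :
    ∀ {π : List A} {s t : Set F}, Exec P s π t →
      Exec (P.transform O) (Sum.inl '' s ∪ obsLt O 0) (π.map Sum.inl)
        (Sum.inl '' t ∪ obsLt O 0) := by
  intro π s t h
  induction h with
  | nil s => exact Exec.nil _
  | cons hpre hexec ih =>
    rename_i s t a π
    refine Exec.cons (pre_inl_subset P O _ _ hpre) ?_
    rw [applyA_inl]
    exact ih

lemma obsLt_zero_union (s : Set F) (O : List A) :
    Sum.inl '' s ∪ (obsLt O 0 : Set (F ⊕ Fin O.length)) = Sum.inl '' s := by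
  rw [show (obsLt O 0 : Set (F ⊕ Fin O.length)) = ∅ by ext x; simp [obsLt], Set.union_empty]

end PRAux2
namespace PRAux3

open Strips PRAux2

variable {F A : Type}

/-- In any execution of the transformed domain whose start state only contains
observation fluents below `k` and whose end state contains all observation
fluents, the observations from `k` on form a sublist of the projected plan. -/
lemma obs_sublist (P : Strips F A) (O : List A) :
    ∀ {π' : List (A ⊕ Fin O.length)} {s' t' : Set (F ⊕ Fin O.length)},
      Exec (P.transform O) s' π' t' →
      ∀ k : ℕ, (∀ j : Fin O.length, Sum.inr j ∈ s' → (j : ℕ) < k) →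
      (∀ j : Fin O.length, Sum.inr j ∈ t') →
      (O.drop k).Sublist (π'.map (proj O)) := by
  intro π' s' t' h
  induction h with
  | nil s =>
    intro k hk hall
    have hmk : O.length ≤ k := by
      by_contra hlt
      push_neg at hlt
      exact absurd (hk ⟨k, hlt⟩ (hall ⟨k, hlt⟩)) (lt_irrefl k)
    rw [List.drop_eq_nil_of_le hmk]
    exact List.nil_sublist _
  | cons hpre hexec ih =>
    rename_i s' t' x π'' 
    intro k hk hall
    cases x with
    | inl a =>
      refine List.Sublist.cons _ (ih k ?_ hall)
      intro j hj
      refine hk j ?_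
      simp only [Strips.applyA, Strips.transform, Set.mem_union, Set.mem_diff,
        Set.mem_image] at hj
      rcases hj with ⟨hj1, -⟩ | ⟨q, -, hq⟩
      · exact hj1
      · cases hq
    | inr K =>
      have hKk : (K : ℕ) ≤ k := by
        rcases Nat.eq_zero_or_pos (K : ℕ) with h0 | h0
        · omega
        · have : Sum.inr (⟨(K : ℕ) - 1, Nat.lt_of_le_of_lt (Nat.sub_le _ _) K.isLt⟩ :
              Fin O.length) ∈ s' := hpre (Or.inr ⟨h0, rfl⟩)
          have := hk _ this
          simp at this
          omega
      have hmem : ∀ j : Fin O.length, Sum.inr j ∈ (P.transform O).applyA s' (Sum.inr K) →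
          Sum.inr j ∈ s' ∨ j = K := by
        intro j hj
        simp only [Strips.applyA, Strips.transform, Set.mem_union, Set.mem_diff,
          Set.mem_image, Set.mem_insert_iff] at hj
        rcases hj with ⟨hj1, -⟩ | (h | ⟨q, -, hq⟩)
        · exact Or.inl hj1
        · exact Or.inr (Sum.inr_injective h)
        · cases hq
      rcases Nat.lt_or_ge (K : ℕ) k with hlt | hge
      · refine List.Sublist.cons _ (ih k ?_ hall)
        intro j hj
        rcases hmem j hj with h | rfl
        · exact hk j h
        · exact hlt
      · have hKeq : (K : ℕ) = k := le_antisymm hKk hge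
        have hkm : k < O.length := hKeq ▸ K.isLt
        have hdrop : O.drop k = O.get ⟨k, hkm⟩ :: O.drop (k + 1) :=
          List.drop_eq_getElem_cons hkm
        rw [hdrop]
        have hget : proj O (Sum.inr K) = O.get ⟨k, hkm⟩ := by
          simp only [proj, Sum.elim_inr]
          congr 1
          exact Fin.ext hKeq
        rw [List.map_cons, hget.symm]
        refine List.Sublist.cons₂ _ (ih (k + 1) ?_ hall)
        intro j hj
        rcases hmem j hj with h | rfl
        · exact Nat.lt_succ_of_lt (hk j h)
        · omega

/-- Lifting: an execution of `P` containing `O.drop k` as a sublist lifts to an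
execution of the transformed domain achieving all observation fluents, with the
same cost. -/
lemma lift_exec (P : Strips F A) (O : List A) (c : A → ℝ) :
    ∀ {D π : List A}, D.Sublist π → ∀ k, D = O.drop k →
    ∀ {s t : Set F}, Exec P s π t →
    ∃ π', Exec (P.transform O) (Sum.inl '' s ∪ obsLt O k) π'
        (Sum.inl '' t ∪ Set.range Sum.inr) ∧
      Strips.planCost (costTransform c O) π' = Strips.planCost c π := by
  intro D π h
  induction h with
  | slnil =>
    intro k hD s t hexec
    cases hexec
    have hk : O.length ≤ k := by
      by_contra hlt
      push_neg at hlt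
      have := hD.symm
      rw [List.drop_eq_getElem_cons hlt] at this
      cases this
    refine ⟨[], ?_, rfl⟩
    rw [obsLt_all O k hk]
    exact Exec.nil _
  | cons a h ih =>
    rename_i D π
    intro k hD s t hexec
    cases hexec with
    | cons hpre hrest =>
      obtain ⟨π', hπ', hcost⟩ := ih k hD hrest
      refine ⟨Sum.inl a :: π', ?_, ?_⟩
      · refine Exec.cons (pre_inl_subset P O _ a hpre) ?_
        rw [applyA_inl]
        exact hπ'
      · simp only [Strips.planCost, List.map_cons, List.sum_cons] at hcost ⊢
        rw [hcost]
        rfl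
  | cons_cons a h ih =>
    rename_i D π
    intro k hD s t hexec
    have hkm : k < O.length := by
      by_contra hge
      push_neg at hge
      rw [List.drop_eq_nil_of_le hge] at hD
      cases hD
    have hdrop : O.drop k = O.get ⟨k, hkm⟩ :: O.drop (k + 1) := List.drop_eq_getElem_cons hkm
    rw [hdrop] at hD
    have ha : a = O.get ⟨k, hkm⟩ := by injection hD
    have hDrest : D = O.drop (k + 1) := by injection hD
    cases hexec with
    | cons hpre hrest =>
      obtain ⟨π', hπ', hcost⟩ := ih (k + 1) hDrest hrest
      refine ⟨Sum.inr ⟨k, hkm⟩ :: π', ?_, ?_⟩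
      · refine Exec.cons ?_ ?_
        · rintro x (⟨q, hq, rfl⟩ | ⟨h0, rfl⟩)
          · exact Or.inl ⟨q, hpre (ha ▸ hq), rfl⟩
          · refine Or.inr ⟨_, rfl, ?_⟩
            simp only [Fin.val_mk] at h0 ⊢
            omega
        · rw [applyA_inr P O s k ⟨k, hkm⟩ rfl, ← ha]
          exact hπ'
      · simp only [Strips.planCost, List.map_cons, List.sum_cons] at hcost ⊢
        rw [hcost, costTransform_eq]
        simp [proj, ha]

end PRAux3
namespace PRAux4

open Strips PRAux PRAux2 PRAux3

variable {F A : Type}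

lemma costTransform_nonneg (c : A → ℝ) (hc : ∀ a, 0 ≤ c a) (O : List A) :
    ∀ x, 0 ≤ costTransform c O x := fun x => by cases x <;> exact hc _

lemma isPlan_map_inl (P : Strips F A) (O : List A) {G : Set F} {π : List A}
    (h : P.IsPlan G π) :
    (P.transform O).IsPlan (Sum.inl '' G) (π.map Sum.inl) := by
  obtain ⟨t, hex, hGt⟩ := h
  refine ⟨Sum.inl '' t ∪ obsLt O 0, ?_, fun x hx => Or.inl (Set.image_mono hGt hx)⟩
  have := exec_inl P O hex
  rwa [obsLt_zero_union] at this

lemma isPlan_proj (P : Strips F A) (O : List A) {G : Set F} {π' : List (A ⊕ Fin O.length)}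
    (h : (P.transform O).IsPlan (Sum.inl '' G) π') :
    P.IsPlan G (π'.map (proj O)) := by
  obtain ⟨t', hex', hGt'⟩ := h
  refine ⟨Sum.inl ⁻¹' t', ?_, fun p hp => hGt' ⟨p, hp, rfl⟩⟩
  have := exec_proj P O hex'
  rwa [show Sum.inl ⁻¹' (P.transform O).I = P.I from
    Set.preimage_image_eq _ Sum.inl_injective] at this

lemma cstar_inl (P : Strips F A) (O : List A) (c : A → ℝ) (hc : ∀ a, 0 ≤ c a)
    (G : Set F) (hsolv : ∃ π, P.IsPlan G π) :
    (P.transform O).cstar (costTransform c O) (Sum.inl '' G) = P.cstar c G := by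
  obtain ⟨π₀, hπ₀⟩ := hsolv
  refine le_antisymm (le_csInf ⟨_, π₀, hπ₀, rfl⟩ ?_) (le_csInf ⟨_, _, isPlan_map_inl P O hπ₀, rfl⟩ ?_)
  · rintro x ⟨ρ, hρ, rfl⟩
    have := cstar_le_planCost (P.transform O) (costTransform c O)
      (costTransform_nonneg c hc O) (isPlan_map_inl P O hρ)
    rwa [planCost_map_inl] at this
  · rintro x ⟨ρ, hρ, rfl⟩
    have := cstar_le_planCost P c hc (isPlan_proj P O hρ)
    rwa [← planCost_map_proj] at this

lemma satisfies_iff_sublist (π O : List A) : Strips.Satisfies π O ↔ O.Sublist π := by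
  rw [List.sublist_iff_exists_fin_orderEmbedding_get_eq]
  constructor
  · rintro ⟨f, hf, hget⟩
    exact ⟨OrderEmbedding.ofStrictMono f hf, fun j => (hget j).symm⟩
  · rintro ⟨f, hf⟩
    exact ⟨f, f.strictMono, fun j => (hf j).symm⟩

end PRAux4

/-- Theorem 2: let `T = ⟨P, 𝒢, O⟩` be a plan-recognition theory
with `O` pairwise distinct, `P' = P.transform O` the transformed domain with
cost `c(o_a) = c(a)`, and `G ∈ 𝒢` solvable in `P`.  Then `G` belongs to the
optimal goal set `𝒢*_T` (some optimal plan for `G` in `P` satisfies `O`) iff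
`G' = G ∪ F_o` is solvable in `P'` and `c*_{P'}(G) = c*_{P'}(G')`. -/
theorem goal_in_optimal_set_iff_equal_cstar
    {F A : Type} [Finite F] [Finite A]
    (P : Strips F A) (𝒢 : Set (Set F)) (O : List A) (hO : O.Nodup)
    (c : A → ℝ) (hc : ∀ a, 0 ≤ c a)
    (G : Set F) (hG : G ∈ 𝒢) (hsolv : ∃ π, P.IsPlan G π) :
    (∃ π, P.IsOptimalPlan c G π ∧ Strips.Satisfies π O) ↔
      ((∃ π', (P.transform O).IsPlan (goalTransform O G) π') ∧
       (P.transform O).cstar (costTransform c O) (Sum.inl '' G) =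
         (P.transform O).cstar (costTransform c O) (goalTransform O G)) := by
  classical
  open Strips PRAux PRAux2 PRAux3 PRAux4 in
  have hc' := PRAux4.costTransform_nonneg c hc O
  have hcG : (P.transform O).cstar (costTransform c O) (Sum.inl '' G) = P.cstar c G :=
    PRAux4.cstar_inl P O c hc G hsolv
  have hplan_of : ∀ π', (P.transform O).IsPlan (goalTransform O G) π' →
      (P.transform O).IsPlan (Sum.inl '' G) π' := by
    rintro π' ⟨t', hex', hGt'⟩
    exact ⟨t', hex', fun x hx => hGt' (Or.inl hx)⟩
  constructor
  · rintro ⟨π, hopt, hsat⟩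
    obtain ⟨t, hex, hGt⟩ := hopt.1
    have hsub : O.Sublist π := (PRAux4.satisfies_iff_sublist π O).1 hsat
    obtain ⟨π', hπ', hcost⟩ := PRAux3.lift_exec P O c hsub 0 (by simp) hex
    rw [PRAux2.obsLt_zero_union] at hπ'
    have hplan' : (P.transform O).IsPlan (goalTransform O G) π' :=
      ⟨_, hπ', Set.union_subset_union (Set.image_mono hGt) subset_rfl⟩
    refine ⟨⟨π', hplan'⟩, le_antisymm ?_ ?_⟩
    · refine csInf_le_csInf (PRAux.costs_bddBelow _ _ hc' _) ⟨_, π', hplan', rfl⟩ ?_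
      exact Set.image_mono fun ρ hρ => hplan_of ρ hρ
    · have h1 : (P.transform O).cstar (costTransform c O) (goalTransform O G)
          ≤ Strips.planCost (costTransform c O) π' :=
        PRAux.cstar_le_planCost _ _ hc' hplan'
      rw [hcost, ← PRAux.cstar_eq_of_optimal P c hc hopt, ← hcG] at h1
      exact h1
  · rintro ⟨⟨π'₀, hπ'₀⟩, hceq⟩
    obtain ⟨π', hopt'⟩ := PRAux.exists_optimal (P.transform O) (costTransform c O) hc'
      ⟨π'₀, hπ'₀⟩
    obtain ⟨t', hex', hGt'⟩ := hopt'.1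
    have hplan : P.IsPlan G (π'.map (PRAux2.proj O)) :=
      PRAux4.isPlan_proj P O (hplan_of π' hopt'.1)
    have hsub : O.Sublist (π'.map (PRAux2.proj O)) := by
      have := PRAux3.obs_sublist P O hex' 0 ?_ ?_
      · simpa using this
      · rintro j ⟨q, -, hq⟩
        cases hq
      · intro j
        exact hGt' (Or.inr ⟨j, rfl⟩)
    have hcosteq : Strips.planCost c (π'.map (PRAux2.proj O)) = P.cstar c G := by
      rw [← PRAux2.planCost_map_proj, ← PRAux.cstar_eq_of_optimal _ _ hc' hopt', ← hceq, hcG]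
    refine ⟨π'.map (PRAux2.proj O), ⟨hplan, fun ρ hρ => ?_⟩,
      (PRAux4.satisfies_iff_sublist _ O).2 hsub⟩
    rw [hcosteq]
    exact PRAux.cstar_le_planCost P c hc hρ
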